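/- Let T be a spanning tree of Q_n and let R be a proper nonempty subset of [n]. If T reduces over R, then π_R(T) is a spanning tree of Q_R. -/

import Mathlib

open SimpleGraph

/-- The `n`-cube: vertices are the subsets of `[n]` (modelled as `Finset (Fin n)`),
with an edge between `X` and `Y` iff their symmetric difference is a singleton. -/
def cube (n : ℕ) : SimpleGraph (Finset (Fin n)) where
  Adj X Y := (symmDiff X Y).card = 1
  symm := by
    constructor
    intro X Y h
    rwa [symmDiff_comm]
  loopless := by
    constructor
    intro X h
    simp [symmDiff_self, Finset.bot_eq_empty] at h

/-- `T` is a spanning tree of `G` (both graphs on the same vertex set). -/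
def IsSpanningTreeOf {V : Type*} (T G : SimpleGraph V) : Prop :=
  T ≤ G ∧ T.IsTree

/-- The edge `e` of the `n`-cube is in direction `i`. -/
def edgeInDir {n : ℕ} (i : Fin n) (e : Sym2 (Finset (Fin n))) : Prop :=
  ∃ X : Finset (Fin n), e = s(X, symmDiff X {i})

/-- The number of edges of `T` in direction `i`. -/
noncomputable def dirCount {n : ℕ} (T : SimpleGraph (Finset (Fin n))) (i : Fin n) : ℕ :=
  {e | e ∈ T.edgeSet ∧ edgeInDir i e}.ncard

/-- `a` is the signature of the tree `T`. -/
def HasSig {n : ℕ} (T : SimpleGraph (Finset (Fin n))) (a : Fin n → ℕ) : Prop :=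
  ∀ i, dirCount T i = a i

/-- `a` is a signature of `Q_n`, i.e. the signature of some spanning tree of the `n`-cube. -/
def IsSignature (n : ℕ) (a : Fin n → ℕ) : Prop :=
  ∃ T, IsSpanningTreeOf T (cube n) ∧ HasSig T a

/-- A section of the set of nonempty subsets of `[n]`. -/
def IsSection {n : ℕ} (ψ : Finset (Fin n) → Fin n) : Prop :=
  ∀ X : Finset (Fin n), X.Nonempty → ψ X ∈ X

/-- The number of nonempty subsets on which the section `ψ` takes the value `i`. -/
noncomputable def secCount {n : ℕ} (ψ : Finset (Fin n) → Fin n) (i : Fin n) : ℕ :=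
  {X : Finset (Fin n) | X.Nonempty ∧ ψ X = i}.ncard

/-- The tuple `a` reduces over `R` : `Σ_{i ∈ R} a i = 2^|R| - 1`. -/
def ReducesOver {n : ℕ} (a : Fin n → ℕ) (R : Finset (Fin n)) : Prop :=
  ∑ i ∈ R, a i = 2 ^ R.card - 1

/-- `a` is reducible: it reduces over some proper nonempty subset of `[n]`. -/
def IsReducibleSig {n : ℕ} (a : Fin n → ℕ) : Prop :=
  ∃ R : Finset (Fin n), R.Nonempty ∧ R ≠ Finset.univ ∧ ReducesOver a R

/-- `a` is irreducible. -/
def IsIrreducibleSig {n : ℕ} (a : Fin n → ℕ) : Prop := ¬ IsReducibleSig a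

/-- `T` is upright: every vertex `X` is at distance `|X|` in `T` from the root `∅`. -/
def IsUpright {n : ℕ} (T : SimpleGraph (Finset (Fin n))) : Prop :=
  ∀ X : Finset (Fin n), T.dist X ∅ = X.card

/-- `ψ` is the section associated to the upright tree `T`: for each nonempty `X`,
`ψ X ∈ X` and `X - {ψ X}` is the next vertex after `X` on the path in `T` from `X` to `∅`. -/
def IsTreeSection {n : ℕ} (T : SimpleGraph (Finset (Fin n))) (ψ : Finset (Fin n) → Fin n) : Prop :=
  ∀ X : Finset (Fin n), X.Nonempty → ψ X ∈ X ∧ T.Adj X (X.erase (ψ X))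

/-- The minimum of `Σ_{i ∈ K} a i` over the sets `K` of `k` directions. -/
noncomputable def minSum {n : ℕ} (a : Fin n → ℕ) (k : ℕ) : ℕ :=
  sInf {m : ℕ | ∃ K : Finset (Fin n), K.card = k ∧ ∑ i ∈ K, a i = m}

/-- The excess of `a` at `k`. -/
noncomputable def excess {n : ℕ} (a : Fin n → ℕ) (k : ℕ) : ℤ :=
  (minSum a k : ℤ) - (2 ^ k - 1)

/-- The result of sliding the edge `e` in direction `i`. -/
def slideEdge {n : ℕ} (i : Fin n) (e : Sym2 (Finset (Fin n))) : Sym2 (Finset (Fin n)) :=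
  Sym2.map (fun X => symmDiff X {i}) e

/-- The edge `e` of the spanning tree `T` of `Q_n` is `i`-slidable. -/
def Slidable (n : ℕ) (T : SimpleGraph (Finset (Fin n))) (i : Fin n)
    (e : Sym2 (Finset (Fin n))) : Prop :=
  e ∈ T.edgeSet ∧
    IsSpanningTreeOf (SimpleGraph.fromEdgeSet ((T.edgeSet \ {e}) ∪ {slideEdge i e})) (cube n)

/-- The edge set `E` is (the edge set of) a spanning tree of the subgraph of the
`n`-cube induced on the vertex set `s`. -/
def IsSpanningTreeOn (n : ℕ) (s : Set (Finset (Fin n))) (E : Set (Sym2 (Finset (Fin n)))) : Prop :=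
  E ⊆ (cube n).edgeSet ∧ (∀ e ∈ E, ∀ v ∈ e, v ∈ s) ∧
    ((SimpleGraph.fromEdgeSet E).induce s).IsTree

/-- The edges of `T` with both endpoints in `s`. -/
def edgesWithin {n : ℕ} (s : Set (Finset (Fin n))) (T : SimpleGraph (Finset (Fin n))) :
    Set (Sym2 (Finset (Fin n))) :=
  {e | e ∈ T.edgeSet ∧ ∀ v ∈ e, v ∈ s}

/-- The edge `e` of the tree with edge set `E`, spanning the subgraph of the `n`-cube
induced on `s`, is `i`-slidable. -/
def SlidableOn (n : ℕ) (s : Set (Finset (Fin n))) (E : Set (Sym2 (Finset (Fin n))))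
    (i : Fin n) (e : Sym2 (Finset (Fin n))) : Prop :=
  e ∈ E ∧ IsSpanningTreeOn n s ((E \ {e}) ∪ {slideEdge i e})

/-- The number of edges of `T` in direction `i` with both endpoints in `s`. -/
noncomputable def dirCountOn {n : ℕ} (s : Set (Finset (Fin n)))
    (T : SimpleGraph (Finset (Fin n))) (i : Fin n) : ℕ :=
  {e | e ∈ T.edgeSet ∧ edgeInDir i e ∧ ∀ v ∈ e, v ∈ s}.ncard

/-- `T'` is a spanning tree of the `n`-cube obtained from the spanning tree `T` by a
single edge slide. -/
def SlideStep (n : ℕ) (T T' : SimpleGraph (Finset (Fin n))) : Prop :=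
  IsSpanningTreeOf T (cube n) ∧ IsSpanningTreeOf T' (cube n) ∧
    ∃ (i : Fin n) (e : Sym2 (Finset (Fin n))), e ∈ T.edgeSet ∧
      T' = SimpleGraph.fromEdgeSet ((T.edgeSet \ {e}) ∪ {slideEdge i e})

/-- The trees `T` and `T'` are related by a single edge slide. -/
def SlideAdj (n : ℕ) (T T' : SimpleGraph (Finset (Fin n))) : Prop :=
  T ≠ T' ∧ ∃ (i : Fin n) (e : Sym2 (Finset (Fin n))),
    (e ∈ T.edgeSet ∧ T' = SimpleGraph.fromEdgeSet ((T.edgeSet \ {e}) ∪ {slideEdge i e})) ∨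
    (e ∈ T'.edgeSet ∧ T = SimpleGraph.fromEdgeSet ((T'.edgeSet \ {e}) ∪ {slideEdge i e}))

/-- The spanning trees of the `n`-cube. -/
def SpanningTrees (n : ℕ) := {T : SimpleGraph (Finset (Fin n)) // IsSpanningTreeOf T (cube n)}

/-- The edge slide graph `E(n)` of the `n`-cube. -/
def eslide (n : ℕ) : SimpleGraph (SpanningTrees n) where
  Adj T T' := SlideAdj n T.1 T'.1
  symm := by
    constructor
    rintro T T' ⟨hne, i, e, h⟩
    exact ⟨hne.symm, i, e, h.symm⟩
  loopless := by
    constructor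
    rintro T ⟨hne, -⟩
    exact hne rfl

/-- The projection `π_R(T)` of `T` to `Q_R`: a graph on the subsets of `R`, with `A`
adjacent to `B` iff some edge of `T` projects to `{A, B}`. -/
def projTree (n : ℕ) (R : Finset (Fin n)) (T : SimpleGraph (Finset (Fin n))) :
    SimpleGraph ↥{W : Finset (Fin n) | W ⊆ R} where
  Adj A B := A.1 ≠ B.1 ∧ ∃ U V : Finset (Fin n), T.Adj U V ∧ U ∩ R = A.1 ∧ V ∩ R = B.1
  symm := by
    constructor
    rintro A B ⟨hne, U, V, hUV, hU, hV⟩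
    exact ⟨hne.symm, V, U, hUV.symm, hV, hU⟩
  loopless := by
    constructor
    rintro A ⟨hne, -⟩
    exact hne rfl

/-- The projected edge set `π_R(T)`: images under `π_R` of the edges of `T` in
directions belonging to `R`. -/
def projEdges {n : ℕ} (R : Finset (Fin n)) (T : SimpleGraph (Finset (Fin n))) :
    Set (Sym2 (Finset (Fin n))) :=
  {f | ∃ e ∈ T.edgeSet, (∃ i ∈ R, edgeInDir i e) ∧ f = Sym2.map (· ∩ R) e}

/-- The decomposition `T ↦ (F_T, (T(R,X))_{X ⊆ R})` of a tree reducing over `R`. -/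
def decompose (n : ℕ) (R : Finset (Fin n)) (T : SimpleGraph (Finset (Fin n))) :
    Set (Sym2 (Finset (Fin n))) ×
      ((X : Finset (Fin n)) → X ⊆ R → SimpleGraph ↥{W : Finset (Fin n) | W ∩ R = X}) :=
  ⟨{e | e ∈ T.edgeSet ∧ ∃ i ∈ R, edgeInDir i e},
   fun X _ => T.induce {W : Finset (Fin n) | W ∩ R = X}⟩

/-- `s` is the least index such that `ε_k(a) = 0` for all `s ≤ k ≤ n`; i.e. the
entries of (an ordered) `a` with index `≤ s` form the unsaturated part of `a`. -/
def UnsatIndex (n : ℕ) (a : Fin n → ℕ) (s : ℕ) : Prop :=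
  (∀ k, s ≤ k → k ≤ n → excess a k = 0) ∧
    ∀ s' < s, ¬ (∀ k, s' ≤ k → k ≤ n → excess a k = 0)

/-- The restriction of `a` to its first `s` entries is reducible (as a tuple of length `s`). -/
def ReducibleBelow {n : ℕ} (a : Fin n → ℕ) (s : ℕ) : Prop :=
  ∃ R : Finset (Fin n), R.Nonempty ∧ (∀ i ∈ R, (i : ℕ) < s) ∧ R.card < s ∧
    ∑ i ∈ R, a i = 2 ^ R.card - 1

/-- `a` is strictly reducible: it is reducible and its unsaturated part is reducible. -/
def StrictlyReducible (n : ℕ) (a : Fin n → ℕ) : Prop :=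
  IsReducibleSig a ∧
    ∃ (σ : Equiv.Perm (Fin n)) (s : ℕ), Monotone (a ∘ σ) ∧
      UnsatIndex n (a ∘ σ) s ∧ ReducibleBelow (a ∘ σ) s

section AuxStmt10

lemma aux_symmDiff_inter {n : ℕ} (U V R : Finset (Fin n)) :
    symmDiff (U ∩ R) (V ∩ R) = symmDiff U V ∩ R := by
  ext x
  simp only [Finset.mem_symmDiff, Finset.mem_inter]
  tauto

lemma aux_edgeInDir_iff {n : ℕ} (i : Fin n) (U V : Finset (Fin n)) :
    edgeInDir i s(U, V) ↔ symmDiff U V = {i} := by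
  constructor
  · rintro ⟨X, hX⟩
    rw [Sym2.eq_iff] at hX
    rcases hX with ⟨rfl, rfl⟩ | ⟨rfl, rfl⟩
    · ext x
      simp only [Finset.mem_symmDiff, Finset.mem_singleton]
      tauto
    · ext x
      simp only [Finset.mem_symmDiff, Finset.mem_singleton]
      tauto
  · intro h
    refine ⟨U, ?_⟩
    have hV : symmDiff U {i} = V := by
      rw [← h]
      ext x
      simp only [Finset.mem_symmDiff, Finset.mem_singleton]
      tauto
    rw [hV]

lemma aux_dir_unique {n : ℕ} {i j : Fin n} {e : Sym2 (Finset (Fin n))}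
    (hi : edgeInDir i e) (hj : edgeInDir j e) : i = j := by
  induction e using Sym2.ind with
  | _ U V =>
    rw [aux_edgeInDir_iff] at hi hj
    exact Finset.singleton_injective (hi.symm.trans hj)

lemma aux_ncard_dirs {n : ℕ} (T : SimpleGraph (Finset (Fin n))) (R : Finset (Fin n)) :
    {e | e ∈ T.edgeSet ∧ ∃ i ∈ R, edgeInDir i e}.ncard = ∑ i ∈ R, dirCount T i := by
  classical
  induction R using Finset.induction_on with
  | empty => simp
  | @insert a s ha ih =>
    have hset : {e | e ∈ T.edgeSet ∧ ∃ i ∈ insert a s, edgeInDir i e}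
        = {e | e ∈ T.edgeSet ∧ edgeInDir a e} ∪ {e | e ∈ T.edgeSet ∧ ∃ i ∈ s, edgeInDir i e} := by
      ext e
      simp only [Set.mem_setOf_eq, Set.mem_union, Finset.mem_insert]
      constructor
      · rintro ⟨h1, i, (rfl | hi), h2⟩
        · exact Or.inl ⟨h1, h2⟩
        · exact Or.inr ⟨h1, i, hi, h2⟩
      · rintro (⟨h1, h2⟩ | ⟨h1, i, hi, h2⟩)
        · exact ⟨h1, a, Or.inl rfl, h2⟩
        · exact ⟨h1, i, Or.inr hi, h2⟩
    have hdisj : Disjoint {e | e ∈ T.edgeSet ∧ edgeInDir a e}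
        {e | e ∈ T.edgeSet ∧ ∃ i ∈ s, edgeInDir i e} := by
      rw [Set.disjoint_left]
      rintro e ⟨h1, h2⟩ ⟨h3, i, hi, h4⟩
      exact ha (by rw [aux_dir_unique h2 h4]; exact hi)
    rw [hset, Set.ncard_union_eq hdisj (Set.toFinite _) (Set.toFinite _), ih,
      Finset.sum_insert ha]
    rfl

lemma aux_conn_card_le {V : Type*} [Fintype V] {G : SimpleGraph V} (h : G.Connected) :
    Fintype.card V ≤ G.edgeSet.ncard + 1 := by
  classical
  obtain ⟨r⟩ := h.nonempty
  have hex : ∀ v : {x : V // x ≠ r}, ∃ u : V, G.Adj v.1 u ∧ G.dist u r < G.dist v.1 r := by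
    rintro ⟨v, hv⟩
    have hreach : G.Reachable v r := h.preconnected v r
    obtain ⟨p, hp⟩ := hreach.exists_walk_length_eq_dist
    have hpos : 0 < G.dist v r := hreach.pos_dist_of_ne hv
    cases p with
    | nil => rw [← hp] at hpos; simp at hpos
    | @cons _ b _ hadj q =>
      refine ⟨b, hadj, ?_⟩
      have h1 := SimpleGraph.dist_le q
      rw [SimpleGraph.Walk.length_cons] at hp
      show G.dist b r < G.dist v r
      omega
  choose u hu1 hu2 using hex
  have hinj : Function.Injective
      (fun v : {x : V // x ≠ r} => (⟨s(v.1, u v), hu1 v⟩ : G.edgeSet)) := by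
    intro v w hvw
    have h2 : s(v.1, u v) = s(w.1, u w) := congrArg Subtype.val hvw
    rw [Sym2.eq_iff] at h2
    rcases h2 with ⟨h3, h4⟩ | ⟨h3, h4⟩
    · exact Subtype.ext h3
    · have h5 := hu2 v
      have h6 := hu2 w
      rw [h3, h4] at h5
      omega
  have hcard := Fintype.card_le_of_injective _ hinj
  have h7 : Fintype.card G.edgeSet = G.edgeSet.ncard := by
    rw [← Nat.card_eq_fintype_card, Nat.card_coe_set_eq]
  have hcard' : Fintype.card {x : V // x ≠ r} ≤ G.edgeSet.ncard := by
    rw [← h7]; exact hcard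
  have h8 : Fintype.card {x : V // x ≠ r} = Fintype.card V - 1 := by
    rw [Fintype.card_subtype_compl, Fintype.card_subtype_eq]
  have h9 : 0 < Fintype.card V := Fintype.card_pos_iff.mpr ⟨r⟩
  omega

lemma aux_isTree_of_card {V : Type*} [Fintype V] {G : SimpleGraph V} (hconn : G.Connected)
    (hcard : G.edgeSet.ncard + 1 ≤ Fintype.card V) : G.IsTree := by
  classical
  refine ⟨hconn, ?_⟩
  intro v c hc
  have h3 : ∃ x y, s(x, y) ∈ c.edges := by
    have hne : c.edges ≠ [] := by
      have h4 := hc.three_le_length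
      intro h5
      have h6 : c.edges.length = c.length := SimpleGraph.Walk.length_edges c
      rw [h5] at h6
      simp at h6
      omega
    obtain ⟨e, he⟩ := List.exists_mem_of_ne_nil _ hne
    revert he
    induction e using Sym2.ind with
    | _ x y => exact fun he => ⟨x, y, he⟩
  obtain ⟨x, y, hxy⟩ := h3
  obtain ⟨hadj, hreach⟩ :=
    SimpleGraph.adj_and_reachable_delete_edges_iff_exists_cycle.mpr ⟨v, c, hc, hxy⟩
  set G' := G \ SimpleGraph.fromEdgeSet {s(x, y)} with hG'
  have hGconn' : G'.Connected := by
    have hNe : Nonempty V := hconn.nonempty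
    refine SimpleGraph.Connected.mk ?_
    intro a b
    obtain ⟨p⟩ := hconn.preconnected a b
    induction p with
    | nil => exact SimpleGraph.Reachable.refl _
    | @cons a' b' c' h q ih =>
      refine SimpleGraph.Reachable.trans ?_ ih
      by_cases he : s(a', b') = s(x, y)
      · rw [Sym2.eq_iff] at he
        rcases he with ⟨rfl, rfl⟩ | ⟨rfl, rfl⟩
        · exact hreach
        · exact hreach.symm
      · refine SimpleGraph.Adj.reachable ?_
        rw [hG', SimpleGraph.sdiff_adj, SimpleGraph.fromEdgeSet_adj]
        exact ⟨h, fun hcon => he (by simpa using hcon.1)⟩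
  have hE : G'.edgeSet = G.edgeSet \ {s(x, y)} := by
    rw [hG', SimpleGraph.edgeSet_sdiff, SimpleGraph.edgeSet_fromEdgeSet,
      SimpleGraph.edgeSet_sdiff_sdiff_isDiag]
  have hmem : s(x, y) ∈ G.edgeSet := hadj
  have h6 : G'.edgeSet.ncard = G.edgeSet.ncard - 1 := by
    rw [hE, Set.ncard_diff_singleton_of_mem hmem]
  have h7 := aux_conn_card_le hGconn'
  have h8 : 0 < G.edgeSet.ncard := (Set.ncard_pos (Set.toFinite _)).mpr ⟨_, hmem⟩
  omega

end AuxStmt10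

/-- Corollary: the projection of a reducible tree is a tree.
If the spanning tree `T` of `Q_n` reduces over the proper nonempty subset `R`, then
`π_R(T)` is a spanning tree of `Q_R`. -/
theorem stmt10 (n : ℕ) (R : Finset (Fin n)) (hR1 : R.Nonempty) (hR2 : R ≠ Finset.univ)
    (T : SimpleGraph (Finset (Fin n))) (hT : IsSpanningTreeOf T (cube n))
    (hred : ReducesOver (fun i => dirCount T i) R) :
    IsSpanningTreeOf (projTree n R T)
      ((cube n).induce {W : Finset (Fin n) | W ⊆ R}) := by
  classical
  obtain ⟨hle, htree⟩ := hT
  -- the projection map on vertices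
  let g : Finset (Fin n) → ↥{W : Finset (Fin n) | W ⊆ R} :=
    fun U => ⟨U ∩ R, by simp only [Set.mem_setOf_eq]; exact Finset.inter_subset_right⟩
  -- key fact: an edge of T whose projections differ has direction in R,
  -- and the projected symmetric difference is a singleton
  have hkey : ∀ U V : Finset (Fin n), T.Adj U V → U ∩ R ≠ V ∩ R →
      ∃ i ∈ R, symmDiff (U ∩ R) (V ∩ R) = {i} ∧ symmDiff U V = {i} := by
    intro U V hUV hne
    have hc : (symmDiff U V).card = 1 := hle hUV
    obtain ⟨i, hi⟩ := Finset.card_eq_one.mp hc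
    have hABd : symmDiff (U ∩ R) (V ∩ R) = {i} ∩ R := by
      rw [aux_symmDiff_inter, hi]
    have hiR : i ∈ R := by
      by_contra hiR
      have : ({i} : Finset (Fin n)) ∩ R = ∅ := by
        simp [Finset.singleton_inter_of_notMem hiR]
      rw [this] at hABd
      exact hne (by
        have := symmDiff_eq_bot.mp (by rw [hABd]; rfl)
        exact this)
    refine ⟨i, hiR, ?_, hi⟩
    rw [hABd, Finset.singleton_inter_of_mem hiR]
  -- the projected tree is a subgraph of the induced cube
  have hsub : projTree n R T ≤ (cube n).induce {W : Finset (Fin n) | W ⊆ R} := by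
    rintro A B ⟨hne, U, V, hUV, hU, hV⟩
    have hne' : U ∩ R ≠ V ∩ R := by rw [hU, hV]; exact hne
    obtain ⟨i, hiR, hd, -⟩ := hkey U V hUV hne'
    show (cube n).Adj A.1 B.1
    show (symmDiff A.1 B.1).card = 1
    rw [← hU, ← hV, hd, Finset.card_singleton]
  -- connectivity
  have hreach : ∀ U V : Finset (Fin n), T.Walk U V →
      (projTree n R T).Reachable (g U) (g V) := by
    intro U V p
    induction p with
    | nil => exact SimpleGraph.Reachable.refl _
    | @cons a b c h q ih =>
      refine SimpleGraph.Reachable.trans ?_ ih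
      by_cases hgab : g a = g b
      · rw [hgab]
      · refine SimpleGraph.Adj.reachable ?_
        exact ⟨fun hh => hgab (Subtype.ext hh), a, b, h, rfl, rfl⟩
  have hconn : (projTree n R T).Connected := by
    have hNe : Nonempty ↥{W : Finset (Fin n) | W ⊆ R} :=
      ⟨⟨∅, by simp only [Set.mem_setOf_eq]; exact Finset.empty_subset R⟩⟩
    refine SimpleGraph.Connected.mk ?_
    intro A B
    obtain ⟨p⟩ := htree.isConnected.preconnected A.1 B.1
    have h1 := hreach A.1 B.1 p
    have hA : g A.1 = A := Subtype.ext (Finset.inter_eq_left.mpr A.2)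
    have hB : g B.1 = B := Subtype.ext (Finset.inter_eq_left.mpr B.2)
    rwa [hA, hB] at h1
  -- edge count bound
  have hSsub : (projTree n R T).edgeSet ⊆
      Sym2.map g '' {e | e ∈ T.edgeSet ∧ ∃ i ∈ R, edgeInDir i e} := by
    intro f hf
    revert hf
    induction f using Sym2.ind with
    | _ A B =>
      rintro ⟨hne, U, V, hUV, hU, hV⟩
      have hne' : U ∩ R ≠ V ∩ R := by rw [hU, hV]; exact hne
      obtain ⟨i, hiR, -, hd⟩ := hkey U V hUV hne'
      refine ⟨s(U, V), ⟨hUV, i, hiR, (aux_edgeInDir_iff i U V).mpr hd⟩, ?_⟩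
      rw [Sym2.map_pair_eq, Sym2.eq_iff]
      exact Or.inl ⟨Subtype.ext hU, Subtype.ext hV⟩
  have hcount : (projTree n R T).edgeSet.ncard ≤ 2 ^ R.card - 1 := by
    calc (projTree n R T).edgeSet.ncard
        ≤ (Sym2.map g '' {e | e ∈ T.edgeSet ∧ ∃ i ∈ R, edgeInDir i e}).ncard :=
          Set.ncard_le_ncard hSsub (Set.toFinite _)
      _ ≤ {e | e ∈ T.edgeSet ∧ ∃ i ∈ R, edgeInDir i e}.ncard :=
          Set.ncard_image_le (Set.toFinite _)
      _ = ∑ i ∈ R, dirCount T i := aux_ncard_dirs T R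
      _ = 2 ^ R.card - 1 := hred
  have hcardV : Fintype.card ↥{W : Finset (Fin n) | W ⊆ R} = 2 ^ R.card := by
    rw [Fintype.card_of_subtype R.powerset (fun x => by
      simp only [Finset.mem_powerset, Set.mem_setOf_eq]), Finset.card_powerset]
  have hpow : 1 ≤ 2 ^ R.card := Nat.one_le_two_pow
  refine ⟨hsub, aux_isTree_of_card hconn ?_⟩
  rw [hcardV]
  omega
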